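/- Let R ∈ End(V⊗V) be an invertible solution of the Yang–Baxter equation and F ∈ End(V⊗V) invertible with R̃ := τ(F)⁻¹ R F. Suppose (a) R₂₃ F₁₂ F₁₃ = F₁₃ F₁₂ R₂₃ and (b) R̃₁₂ F₁₃ F₂₃ = F₂₃ F₁₃ R̃₁₂ hold in End(V⊗V⊗V). Then R̃ satisfies the Yang–Baxter equation R̃₁₂ R̃₁₃ R̃₂₃ = R̃₂₃ R̃₁₃ R̃₁₂. -/
import Mathlib


open TensorProduct

noncomputable section
variable (k V : Type*) [Field k] [AddCommGroup V] [Module k V]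

/-- The flip `P : V ⊗ V → V ⊗ V`. -/
def flipE : Module.End k (V ⊗[k] V) := (TensorProduct.comm k V V).toLinearMap

/-- `τ(X) = P X P`. -/
def tauE (X : Module.End k (V ⊗[k] V)) : Module.End k (V ⊗[k] V) :=
  flipE k V * X * flipE k V

/-- The embedding `X ↦ X₂₃` into `End(V ⊗ V ⊗ V)`. -/
def leg23 (X : Module.End k (V ⊗[k] V)) : Module.End k (V ⊗[k] (V ⊗[k] V)) :=
  LinearMap.lTensor V X

/-- The embedding `X ↦ X₁₂` into `End(V ⊗ V ⊗ V)`. -/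
def leg12 (X : Module.End k (V ⊗[k] V)) : Module.End k (V ⊗[k] (V ⊗[k] V)) :=
  (TensorProduct.assoc k V V V).toLinearMap ∘ₗ LinearMap.rTensor V X ∘ₗ
    (TensorProduct.assoc k V V V).symm.toLinearMap

/-- The flip of factors 1 and 2. -/
def P12 : Module.End k (V ⊗[k] (V ⊗[k] V)) := leg12 k V (flipE k V)

/-- The flip of factors 2 and 3. -/
def P23 : Module.End k (V ⊗[k] (V ⊗[k] V)) := leg23 k V (flipE k V)

/-- The embedding `X ↦ X₁₃`. -/
def leg13 (X : Module.End k (V ⊗[k] V)) : Module.End k (V ⊗[k] (V ⊗[k] V)) :=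
  P23 k V * leg12 k V X * P23 k V

/-- The Yang–Baxter equation `R₁₂R₁₃R₂₃ = R₂₃R₁₃R₁₂`. -/
def YB (R : Module.End k (V ⊗[k] V)) : Prop :=
  leg12 k V R * leg13 k V R * leg23 k V R = leg23 k V R * leg13 k V R * leg12 k V R

/-! ### Generic group-theoretic helper lemmas -/

section GroupLemmas
variable {G : Type*} [Group G]

private lemma gconj {x a b : G} (h : x*(a*b) = b*(a*x)) (y : G) :
    x*y = a⁻¹*(b⁻¹*(x*(a*(b*y)))) := by
  have h1 : x*(a*(b*y)) = (x*(a*b))*y := by group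
  rw [h1, h]; group

private lemma gswap {x a b : G} (h : x*(a*b) = b*(a*x)) (y : G) :
    x*(b⁻¹*(a⁻¹*y)) = a⁻¹*(b⁻¹*(x*y)) := by
  have h2 : b*(a*(x*(b⁻¹*(a⁻¹*y)))) = b*(a*(a⁻¹*(b⁻¹*(x*y)))) := by
    have h3 : b*(a*(x*(b⁻¹*(a⁻¹*y)))) = (b*(a*x))*(b⁻¹*(a⁻¹*y)) := by group
    rw [h3, ← h]; group
  exact mul_left_cancel (mul_left_cancel h2)

private lemma gmove {x a b : G} (h : x*(a*b) = b*(a*x)) (y : G) :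
    b*(a*(x*y)) = x*(a*(b*y)) := by
  have h1 : b*(a*(x*y)) = (b*(a*x))*y := by group
  rw [h1, ← h]; group

private lemma gYB {r12 r13 r23 : G} (h : r12*(r13*r23) = r23*(r13*r12)) (y : G) :
    r12*(r13*(r23*y)) = r23*(r13*(r12*y)) := by
  have h1 : r12*(r13*(r23*y)) = (r12*(r13*r23))*y := by group
  rw [h1, h]; group

private lemma conj3 (p : G) {x y z : G} (h : x*(y*z) = z*(y*x)) :
    (p*x*p⁻¹)*((p*y*p⁻¹)*(p*z*p⁻¹)) = (p*z*p⁻¹)*((p*y*p⁻¹)*(p*x*p⁻¹)) := by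
  have h1 : (p*x*p⁻¹)*((p*y*p⁻¹)*(p*z*p⁻¹)) = p*(x*(y*z))*p⁻¹ := by group
  have h2 : (p*z*p⁻¹)*((p*y*p⁻¹)*(p*x*p⁻¹)) = p*(z*(y*x))*p⁻¹ := by group
  rw [h1, h2, h]

/-- The core computation: both sides of the twisted YBE reduce, using the
factorization conditions, to a common conjugate of the YBE for `R`. -/
private lemma key (r12 r13 r23 f12 f13 f23 f21 f31 f32 rt12 rt13 rt23 : G)
    (hrt12 : rt12 = f21⁻¹*(r12*f12))
    (hrt13 : rt13 = f31⁻¹*(r13*f13))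
    (hrt23 : rt23 = f32⁻¹*(r23*f23))
    (hYB : r12*(r13*r23) = r23*(r13*r12))
    (ha : r23*(f12*f13) = f13*(f12*r23))
    (haa : r13*(f21*f23) = f23*(f21*r13))
    (hab : r12*(f31*f32) = f32*(f31*r12))
    (hb : rt12*(f13*f23) = f23*(f13*rt12))
    (hba : rt13*(f12*f32) = f32*(f12*rt13))
    (hbg : rt23*(f21*f31) = f31*(f21*rt23)) :
    rt12*(rt13*rt23) = rt23*(rt13*rt12) := by
  have L : rt12*(rt13*rt23)
      = f21⁻¹*(f31⁻¹*(f32⁻¹*(r23*(r13*(r12*(f12*(f13*f23))))))) := by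
    calc rt12*(rt13*rt23)
        = rt12*(f12⁻¹*(f32⁻¹*(rt13*(f12*(f32*rt23))))) := by rw [← gconj hba rt23]
      _ = f21⁻¹*(r12*(f32⁻¹*(rt13*(f12*(r23*f23))))) := by rw [hrt12, hrt23]; group
      _ = f21⁻¹*(r12*(f32⁻¹*(f31⁻¹*(r13*(f13*(f12*(r23*f23))))))) := by rw [hrt13]; group
      _ = f21⁻¹*(f31⁻¹*(f32⁻¹*(r12*(r13*(f13*(f12*(r23*f23))))))) := by
            rw [gswap hab (r13*(f13*(f12*(r23*f23))))]
      _ = f21⁻¹*(f31⁻¹*(f32⁻¹*(r12*(r13*(r23*(f12*(f13*f23))))))) := by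
            rw [gmove ha f23]
      _ = f21⁻¹*(f31⁻¹*(f32⁻¹*(r23*(r13*(r12*(f12*(f13*f23))))))) := by
            rw [gYB hYB (f12*(f13*f23))]
  have Rh : rt23*(rt13*rt12)
      = f21⁻¹*(f31⁻¹*(f32⁻¹*(r23*(r13*(r12*(f12*(f13*f23))))))) := by
    calc rt23*(rt13*rt12)
        = rt23*(f31⁻¹*(r13*(f13*rt12))) := by rw [hrt13]; group
      _ = rt23*(f31⁻¹*(f21⁻¹*(f23⁻¹*(r13*(f21*(f23*(f13*rt12))))))) := by
            rw [← gconj haa (f13*rt12)]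
      _ = f21⁻¹*(f31⁻¹*(rt23*(f23⁻¹*(r13*(f21*(f23*(f13*rt12))))))) := by
            rw [gswap hbg (f23⁻¹*(r13*(f21*(f23*(f13*rt12)))))]
      _ = f21⁻¹*(f31⁻¹*(rt23*(f23⁻¹*(r13*(f21*(rt12*(f13*f23))))))) := by rw [← hb]
      _ = f21⁻¹*(f31⁻¹*(f32⁻¹*(r23*(r13*(r12*(f12*(f13*f23))))))) := by
            rw [hrt23, hrt12]; group
  rw [L, Rh]

end GroupLemmas

/-! ### Basic properties of the leg embeddings -/

lemma flip_sq : flipE k V * flipE k V = 1 := by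
  apply TensorProduct.ext'
  intro x y
  simp [flipE, Module.End.mul_apply]

lemma tauE_mul (X Y : Module.End k (V ⊗[k] V)) :
    tauE k V (X * Y) = tauE k V X * tauE k V Y := by
  simp only [tauE]
  rw [show flipE k V * X * flipE k V * (flipE k V * Y * flipE k V)
      = flipE k V * X * ((flipE k V * flipE k V) * Y) * flipE k V by noncomm_ring,
    flip_sq, one_mul]
  noncomm_ring

lemma tauE_one : tauE k V 1 = 1 := by
  rw [tauE, mul_one, flip_sq]

lemma ext23 {f g : Module.End k (V ⊗[k] (V ⊗[k] V))}
    (h : ∀ (x : V) (t : V ⊗[k] V), f (x ⊗ₜ t) = g (x ⊗ₜ t)) : f = g :=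
  TensorProduct.ext' h

lemma ext12 {f g : Module.End k (V ⊗[k] (V ⊗[k] V))}
    (h : ∀ (t : V ⊗[k] V) (z : V),
      f ((TensorProduct.assoc k V V V) (t ⊗ₜ z)) = g ((TensorProduct.assoc k V V V) (t ⊗ₜ z))) :
    f = g := by
  have h2 : f ∘ₗ (TensorProduct.assoc k V V V).toLinearMap
      = g ∘ₗ (TensorProduct.assoc k V V V).toLinearMap :=
    TensorProduct.ext' fun t z => by simpa using h t z
  apply LinearMap.ext
  intro w
  have := LinearMap.congr_fun h2 ((TensorProduct.assoc k V V V).symm w)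
  simpa using this

lemma leg12_apply (X : Module.End k (V ⊗[k] V)) (t : V ⊗[k] V) (z : V) :
    leg12 k V X ((TensorProduct.assoc k V V V) (t ⊗ₜ z))
      = (TensorProduct.assoc k V V V) (X t ⊗ₜ z) := by
  simp [leg12]

lemma leg23_apply (X : Module.End k (V ⊗[k] V)) (x : V) (t : V ⊗[k] V) :
    leg23 k V X (x ⊗ₜ t) = x ⊗ₜ (X t) := by
  simp [leg23]

lemma leg12_mul (X Y : Module.End k (V ⊗[k] V)) :
    leg12 k V (X * Y) = leg12 k V X * leg12 k V Y := by
  apply ext12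
  intro t z
  simp [leg12_apply, Module.End.mul_apply]

lemma leg12_one : leg12 k V 1 = 1 := by
  apply ext12
  intro t z
  simp [leg12_apply]

lemma leg23_mul (X Y : Module.End k (V ⊗[k] V)) :
    leg23 k V (X * Y) = leg23 k V X * leg23 k V Y := by
  apply ext23
  intro x t
  simp [leg23_apply, Module.End.mul_apply]

lemma leg23_one : leg23 k V 1 = 1 := by
  apply ext23
  intro x t
  simp [leg23_apply]

lemma p12_sq : P12 k V * P12 k V = 1 := by
  rw [P12, ← leg12_mul, flip_sq, leg12_one]

lemma p23_sq : P23 k V * P23 k V = 1 := by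
  rw [P23, ← leg23_mul, flip_sq, leg23_one]

lemma c_apply (x : V) (s : V ⊗[k] V) :
    P23 k V (P12 k V (x ⊗ₜ s)) = (TensorProduct.assoc k V V V) (s ⊗ₜ x) := by
  induction s using TensorProduct.induction_on with
  | zero => simp
  | tmul u v =>
      rw [show x ⊗ₜ[k] (u ⊗ₜ[k] v) = (TensorProduct.assoc k V V V) ((x ⊗ₜ u) ⊗ₜ v) from rfl]
      rw [P12, leg12_apply]
      simp [flipE, P23, leg23_apply]
  | add s₁ s₂ ih₁ ih₂ => simp [tmul_add, add_tmul, ih₁, ih₂]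

lemma cycle_comm (X : Module.End k (V ⊗[k] V)) :
    (P23 k V * P12 k V) * leg23 k V X = leg12 k V X * (P23 k V * P12 k V) := by
  apply ext23
  intro x t
  simp only [Module.End.mul_apply, leg23_apply, c_apply, leg12_apply]

lemma P23_leg23 (X : Module.End k (V ⊗[k] V)) :
    P23 k V * leg23 k V X * P23 k V = leg23 k V (tauE k V X) := by
  rw [P23, ← leg23_mul, ← leg23_mul]
  rfl

lemma P12_leg12 (X : Module.End k (V ⊗[k] V)) :
    P12 k V * leg12 k V X * P12 k V = leg12 k V (tauE k V X) := by
  rw [P12, ← leg12_mul, ← leg12_mul]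
  rfl

/-! ### Monoid homomorphisms and units -/

def leg12M : Module.End k (V ⊗[k] V) →* Module.End k (V ⊗[k] (V ⊗[k] V)) where
  toFun := leg12 k V
  map_one' := leg12_one k V
  map_mul' := leg12_mul k V

def leg23M : Module.End k (V ⊗[k] V) →* Module.End k (V ⊗[k] (V ⊗[k] V)) where
  toFun := leg23 k V
  map_one' := leg23_one k V
  map_mul' := leg23_mul k V

def tauM : Module.End k (V ⊗[k] V) →* Module.End k (V ⊗[k] V) where
  toFun := tauE k V
  map_one' := tauE_one k V
  map_mul' := tauE_mul k V

def p12u : (Module.End k (V ⊗[k] (V ⊗[k] V)))ˣ :=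
  ⟨P12 k V, P12 k V, p12_sq k V, p12_sq k V⟩
def p23u : (Module.End k (V ⊗[k] (V ⊗[k] V)))ˣ :=
  ⟨P23 k V, P23 k V, p23_sq k V, p23_sq k V⟩

def L12u : (Module.End k (V ⊗[k] V))ˣ →* (Module.End k (V ⊗[k] (V ⊗[k] V)))ˣ :=
  Units.map (leg12M k V)
def L23u : (Module.End k (V ⊗[k] V))ˣ →* (Module.End k (V ⊗[k] (V ⊗[k] V)))ˣ :=
  Units.map (leg23M k V)
def tauU : (Module.End k (V ⊗[k] V))ˣ →* (Module.End k (V ⊗[k] V))ˣ :=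
  Units.map (tauM k V)
def L13u (u : (Module.End k (V ⊗[k] V))ˣ) : (Module.End k (V ⊗[k] (V ⊗[k] V)))ˣ :=
  p23u k V * L12u k V u * (p23u k V)⁻¹

lemma p12u_inv : (p12u k V)⁻¹ = p12u k V := Units.ext rfl
lemma p23u_inv : (p23u k V)⁻¹ = p23u k V := Units.ext rfl
lemma p12u_sq : p12u k V * p12u k V = 1 := Units.ext (p12_sq k V)
lemma p23u_sq : p23u k V * p23u k V = 1 := Units.ext (p23_sq k V)

@[simp] lemma leg12M_apply (X : Module.End k (V ⊗[k] V)) : leg12M k V X = leg12 k V X := rfl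
@[simp] lemma leg23M_apply (X : Module.End k (V ⊗[k] V)) : leg23M k V X = leg23 k V X := rfl
@[simp] lemma tauM_apply (X : Module.End k (V ⊗[k] V)) : tauM k V X = tauE k V X := rfl
@[simp] lemma p12u_val : (p12u k V : Module.End k (V ⊗[k] (V ⊗[k] V))) = P12 k V := rfl
@[simp] lemma p23u_val : (p23u k V : Module.End k (V ⊗[k] (V ⊗[k] V))) = P23 k V := rfl
@[simp] lemma p12u_inv_val :
    ((p12u k V)⁻¹ : (Module.End k (V ⊗[k] (V ⊗[k] V)))ˣ).val = P12 k V := rfl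
@[simp] lemma p23u_inv_val :
    ((p23u k V)⁻¹ : (Module.End k (V ⊗[k] (V ⊗[k] V)))ˣ).val = P23 k V := rfl
@[simp] lemma L12u_val (u : (Module.End k (V ⊗[k] V))ˣ) :
    (L12u k V u : Module.End k (V ⊗[k] (V ⊗[k] V))) = leg12 k V ↑u := rfl
@[simp] lemma L23u_val (u : (Module.End k (V ⊗[k] V))ˣ) :
    (L23u k V u : Module.End k (V ⊗[k] (V ⊗[k] V))) = leg23 k V ↑u := rfl
@[simp] lemma tauU_val (u : (Module.End k (V ⊗[k] V))ˣ) :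
    (tauU k V u : Module.End k (V ⊗[k] V)) = tauE k V ↑u := rfl

@[simp] lemma L13u_val (u : (Module.End k (V ⊗[k] V))ˣ) :
    (L13u k V u : Module.End k (V ⊗[k] (V ⊗[k] V))) = leg13 k V ↑u := by
  simp [L13u, Units.val_mul, leg13]

lemma U1 (u : (Module.End k (V ⊗[k] V))ˣ) :
    p23u k V * L12u k V u * (p23u k V)⁻¹ = L13u k V u := rfl

lemma U2 (u : (Module.End k (V ⊗[k] V))ˣ) :
    p23u k V * L23u k V u * (p23u k V)⁻¹ = L23u k V (tauU k V u) := by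
  apply Units.ext
  simp only [Units.val_mul, p23u_val, p23u_inv_val, L23u_val, tauU_val]
  rw [P23_leg23]

lemma U3 (u : (Module.End k (V ⊗[k] V))ˣ) :
    p12u k V * L12u k V u * (p12u k V)⁻¹ = L12u k V (tauU k V u) := by
  apply Units.ext
  simp only [Units.val_mul, p12u_val, p12u_inv_val, L12u_val, tauU_val]
  rw [P12_leg12]

lemma cycleU (u : (Module.End k (V ⊗[k] V))ˣ) :
    (p23u k V * p12u k V) * L23u k V u = L12u k V u * (p23u k V * p12u k V) := by
  apply Units.ext
  simp only [Units.val_mul, p12u_val, p23u_val, L12u_val, L23u_val]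
  rw [cycle_comm]

lemma U4 (u : (Module.End k (V ⊗[k] V))ˣ) :
    p12u k V * L23u k V u * (p12u k V)⁻¹ = L13u k V u := by
  have hc := cycleU k V u
  calc p12u k V * L23u k V u * (p12u k V)⁻¹
      = (p23u k V)⁻¹ * ((p23u k V * p12u k V) * L23u k V u) * (p12u k V)⁻¹ := by group
    _ = (p23u k V)⁻¹ * (L12u k V u * (p23u k V * p12u k V)) * (p12u k V)⁻¹ := by rw [hc]
    _ = (p23u k V)⁻¹ * L12u k V u * p23u k V := by group
    _ = p23u k V * L12u k V u * (p23u k V)⁻¹ := by rw [p23u_inv]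
    _ = L13u k V u := rfl

lemma U5 (u : (Module.End k (V ⊗[k] V))ˣ) :
    p23u k V * L13u k V u * (p23u k V)⁻¹ = L12u k V u := by
  rw [← U1, p23u_inv]
  calc p23u k V * (p23u k V * L12u k V u * p23u k V) * p23u k V
      = (p23u k V * p23u k V) * L12u k V u * (p23u k V * p23u k V) := by group
    _ = L12u k V u := by rw [p23u_sq, one_mul, mul_one]

lemma U6 (u : (Module.End k (V ⊗[k] V))ˣ) :
    p12u k V * L13u k V u * (p12u k V)⁻¹ = L23u k V u := by
  rw [← U4, p12u_inv]
  calc p12u k V * (p12u k V * L23u k V u * p12u k V) * p12u k V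
      = (p12u k V * p12u k V) * L23u k V u * (p12u k V * p12u k V) := by group
    _ = L23u k V u := by rw [p12u_sq, one_mul, mul_one]

lemma L13u_mul (u v : (Module.End k (V ⊗[k] V))ˣ) :
    L13u k V (u * v) = L13u k V u * L13u k V v := by
  simp only [L13u, map_mul]; group

lemma L13u_inv (u : (Module.End k (V ⊗[k] V))ˣ) :
    L13u k V u⁻¹ = (L13u k V u)⁻¹ := by
  simp only [L13u, map_inv]; group

/-- Unit-level version of the main theorem. -/
theorem main_units (uR uF : (Module.End k (V ⊗[k] V))ˣ)
    (hYBu : L12u k V uR * (L13u k V uR * L23u k V uR)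
      = L23u k V uR * (L13u k V uR * L12u k V uR))
    (hau : L23u k V uR * (L12u k V uF * L13u k V uF)
      = (L13u k V uF * L12u k V uF) * L23u k V uR)
    (hbu : L12u k V ((tauU k V uF)⁻¹ * uR * uF) * (L13u k V uF * L23u k V uF)
      = (L23u k V uF * L13u k V uF) * L12u k V ((tauU k V uF)⁻¹ * uR * uF)) :
    L12u k V ((tauU k V uF)⁻¹ * uR * uF)
      * (L13u k V ((tauU k V uF)⁻¹ * uR * uF) * L23u k V ((tauU k V uF)⁻¹ * uR * uF))
    = L23u k V ((tauU k V uF)⁻¹ * uR * uF)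
      * (L13u k V ((tauU k V uF)⁻¹ * uR * uF) * L12u k V ((tauU k V uF)⁻¹ * uR * uF)) := by
  have hrt12 : L12u k V ((tauU k V uF)⁻¹ * uR * uF)
      = (L12u k V (tauU k V uF))⁻¹ * (L12u k V uR * L12u k V uF) := by
    rw [map_mul, map_mul, map_inv]; group
  have hrt23 : L23u k V ((tauU k V uF)⁻¹ * uR * uF)
      = (L23u k V (tauU k V uF))⁻¹ * (L23u k V uR * L23u k V uF) := by
    rw [map_mul, map_mul, map_inv]; group
  have hrt13 : L13u k V ((tauU k V uF)⁻¹ * uR * uF)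
      = (L13u k V (tauU k V uF))⁻¹ * (L13u k V uR * L13u k V uF) := by
    rw [L13u_mul, L13u_mul, L13u_inv]; group
  have ha' : L23u k V uR * (L12u k V uF * L13u k V uF)
      = L13u k V uF * (L12u k V uF * L23u k V uR) := by rw [hau]; group
  have hb' : L12u k V ((tauU k V uF)⁻¹ * uR * uF) * (L13u k V uF * L23u k V uF)
      = L23u k V uF * (L13u k V uF * L12u k V ((tauU k V uF)⁻¹ * uR * uF)) := by
    rw [hbu]; group
  have haa := conj3 (p12u k V) ha'
  rw [U4, U3, U6] at haa
  have hab := conj3 (p23u k V) haa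
  rw [U5, U1, U2] at hab
  have hba := conj3 (p23u k V) hb'
  rw [U1, U5, U2] at hba
  have hbg := conj3 (p12u k V) hba
  rw [U6, U3, U4] at hbg
  exact key _ _ _ _ _ _ _ _ _ _ _ _ hrt12 hrt13 hrt23 hYBu ha' haa hab hb' hba hbg

/-- if `R` is an invertible solution of YBE, `F` invertible,
`R̃ = τ(F)⁻¹ R F`, and the factorization conditions `R₂₃F₁₂F₁₃ = F₁₃F₁₂R₂₃` and
`R̃₁₂F₁₃F₂₃ = F₂₃F₁₃R̃₁₂` hold, then `R̃` solves YBE. -/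
theorem factorized_twist [FiniteDimensional k V]
    (R R' F F' : Module.End k (V ⊗[k] V))
    (hR : R * R' = 1) (hR' : R' * R = 1)
    (hF : F * F' = 1) (hF' : F' * F = 1)
    (hYB : YB k V R)
    (ha : leg23 k V R * (leg12 k V F * leg13 k V F) =
      (leg13 k V F * leg12 k V F) * leg23 k V R)
    (hb : leg12 k V (tauE k V F' * R * F) * (leg13 k V F * leg23 k V F) =
      (leg23 k V F * leg13 k V F) * leg12 k V (tauE k V F' * R * F)) :
    YB k V (tauE k V F' * R * F) := by
  set uR : (Module.End k (V ⊗[k] V))ˣ := ⟨R, R', hR, hR'⟩ with huR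
  set uF : (Module.End k (V ⊗[k] V))ˣ := ⟨F, F', hF, hF'⟩ with huF
  have huRval : (uR : Module.End k (V ⊗[k] V)) = R := rfl
  have huFval : (uF : Module.End k (V ⊗[k] V)) = F := rfl
  have htauval : (((tauU k V uF)⁻¹ : (Module.End k (V ⊗[k] V))ˣ) :
      Module.End k (V ⊗[k] V)) = tauE k V F' := rfl
  have hXval : (((tauU k V uF)⁻¹ * uR * uF : (Module.End k (V ⊗[k] V))ˣ) :
      Module.End k (V ⊗[k] V)) = tauE k V F' * R * F := by
    simp only [Units.val_mul, htauval, huRval, huFval]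
  have hYBu : L12u k V uR * (L13u k V uR * L23u k V uR)
      = L23u k V uR * (L13u k V uR * L12u k V uR) := by
    apply Units.ext
    simp only [Units.val_mul, L12u_val, L13u_val, L23u_val, huRval]
    rw [← mul_assoc, ← mul_assoc, hYB]
  have hau : L23u k V uR * (L12u k V uF * L13u k V uF)
      = (L13u k V uF * L12u k V uF) * L23u k V uR := by
    apply Units.ext
    simp only [Units.val_mul, L12u_val, L13u_val, L23u_val, huRval, huFval]
    exact ha
  have hbu : L12u k V ((tauU k V uF)⁻¹ * uR * uF) * (L13u k V uF * L23u k V uF)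
      = (L23u k V uF * L13u k V uF) * L12u k V ((tauU k V uF)⁻¹ * uR * uF) := by
    apply Units.ext
    simp only [Units.val_mul, L12u_val, L13u_val, L23u_val, huFval, hXval]
    exact hb
  have main := main_units k V uR uF hYBu hau hbu
  have mv := congrArg Units.val main
  simp only [Units.val_mul, L12u_val, L13u_val, L23u_val, hXval] at mv
  unfold YB
  rw [mul_assoc, mul_assoc]
  exact mv
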